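/- arXiv:2207.00079 — 3 statements merged into one kernel-verified Lean document; each statement's English description precedes it below -/
import Mathlib

section
/- Let W : GL⁺(3,ℝ) → [0,∞) be a C² strain energy function that is homogeneous of degree h, and let S be its Piola–Kirchhoff stress. Let τ > 0, μ ∈ ℝ, and let a ∈ C²([0,τ)) be positive and solve ä(t) = μ a(t)^{h−1} on [0,τ). Let φ ∈ C²(B,ℝ³) ∩ C¹(closure(B),ℝ³) satisfy Dφ(y) ∈ GL⁺(3,ℝ) for all y, solve (D·S(Dφ))(y) = μ φ(y) in B, and satisfy S(Dφ(y)) (y/|y|) = 0 for |y| = 1. Then the motion x(t,y) = a(t) φ(y) satisfies ∂²_t x(t,y) = (D_y·S(D_y x(t,·)))(y) for all (t,y) ∈ [0,τ) × B, and S(D_y x(t,y)) (y/|y|) = 0 for all t ∈ [0,τ) and |y| = 1. -/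
open Matrix Set MeasureTheory

noncomputable section

attribute [local instance] Matrix.normedAddCommGroup Matrix.normedSpace

abbrev Mat3 := Matrix (Fin 3) (Fin 3) ℝ
abbrev V3 := EuclideanSpace ℝ (Fin 3)

def GLpos (F : Mat3) : Prop := 0 < F.det

def Objective (W : Mat3 → ℝ) : Prop :=
  ∀ F : Mat3, GLpos F → ∀ U : Mat3, U * Uᵀ = 1 → U.det = 1 → W (U * F) = W F

def Isotropic (W : Mat3 → ℝ) : Prop :=
  ∀ F : Mat3, GLpos F → ∀ U : Mat3, U * Uᵀ = 1 → U.det = 1 → W (F * U) = W F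

def HomDeg (W : Mat3 → ℝ) (h : ℝ) : Prop :=
  ∀ F : Mat3, GLpos F → ∀ σ : ℝ, 0 < σ → W (σ • F) = σ ^ h * W F

noncomputable def PK (W : Mat3 → ℝ) (F : Mat3) : Mat3 :=
  Matrix.of fun i j => fderiv ℝ W F (Matrix.single i j 1)

noncomputable def jac (φ : V3 → V3) (y : V3) : Mat3 :=
  Matrix.of fun i j => fderiv ℝ (fun z => φ z i) y (EuclideanSpace.single j 1)

noncomputable def jacIn (φ : V3 → V3) (s : Set V3) (y : V3) : Mat3 :=
  Matrix.of fun i j => fderivWithin ℝ (fun z => φ z i) s y (EuclideanSpace.single j 1)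

noncomputable def divMat (S : V3 → Mat3) (y : V3) : V3 :=
  WithLp.toLp 2 (fun i => ∑ j : Fin 3, fderiv ℝ (fun z => S z i j) y (EuclideanSpace.single j 1))

noncomputable def P1 (ω : V3) : Mat3 := Matrix.vecMulVec (fun i => ω i) (fun i => ω i)

noncomputable def P2 (ω : V3) : Mat3 := 1 - P1 ω

noncomputable def Fmat (l1 l2 : ℝ) (ω : V3) : Mat3 := l1 • P1 ω + l2 • P2 ω

-- AUX

lemma isOpen_GLpos : IsOpen {F : Mat3 | GLpos F} :=
  isOpen_lt continuous_const continuous_id.matrix_det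

lemma fderiv_const_mul_ne {E : Type*} [NormedAddCommGroup E] [NormedSpace ℝ E]
    (c : ℝ) (hc : c ≠ 0) (f : E → ℝ) (y : E) :
    fderiv ℝ (fun z => c * f z) y = c • fderiv ℝ f y := by
  by_cases hf : DifferentiableAt ℝ f y
  · exact fderiv_const_mul hf c
  · have hcf : ¬ DifferentiableAt ℝ (fun z => c * f z) y := by
      intro hcf
      apply hf
      have := hcf.const_mul c⁻¹
      simpa [← mul_assoc, inv_mul_cancel₀ hc] using this
    rw [fderiv_zero_of_not_differentiableAt hf, fderiv_zero_of_not_differentiableAt hcf,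
      smul_zero]

lemma PK_smul (W : Mat3 → ℝ) (h : ℝ)
    (hWC2 : ContDiffOn ℝ 2 W {F : Mat3 | GLpos F}) (hWhom : HomDeg W h)
    {F : Mat3} (hF : GLpos F) {σ : ℝ} (hσ : 0 < σ) :
    PK W (σ • F) = σ ^ (h - 1) • PK W F := by
  have hopen := isOpen_GLpos
  have hdW : ∀ {G : Mat3}, GLpos G → DifferentiableAt ℝ W G := fun hG =>
    (hWC2.contDiffAt (hopen.mem_nhds hG)).differentiableAt two_ne_zero
  have hmemσ : GLpos (σ • F) := by
    have : (σ • F).det = σ ^ (3:ℕ) * F.det := by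
      simp [Matrix.det_smul]
    simp only [GLpos, this]
    exact mul_pos (pow_pos hσ 3) hF
  have e1 : fderiv ℝ (fun G : Mat3 => W (σ • G)) F
      = (fderiv ℝ W (σ • F)).comp (σ • ContinuousLinearMap.id ℝ Mat3) := by
    have h1 : HasFDerivAt (fun G : Mat3 => σ • G) (σ • ContinuousLinearMap.id ℝ Mat3) F := by
      exact (hasFDerivAt_id F).const_smul σ
    exact ((hdW hmemσ).hasFDerivAt.comp F h1).fderiv
  have e2 : fderiv ℝ (fun G : Mat3 => W (σ • G)) F = fderiv ℝ (fun G => σ ^ h * W G) F :=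
    Filter.EventuallyEq.fderiv_eq
      (Filter.eventuallyEq_of_mem (hopen.mem_nhds hF) fun G hG => hWhom G hG σ hσ)
  have e3 : fderiv ℝ (fun G : Mat3 => σ ^ h * W G) F = σ ^ h • fderiv ℝ W F :=
    fderiv_const_mul (hdW hF) _
  have key : ∀ V : Mat3, σ * fderiv ℝ W (σ • F) V = σ ^ h * fderiv ℝ W F V := by
    intro V
    have := congrArg (fun L : Mat3 →L[ℝ] ℝ => L V) (e1.symm.trans (e2.trans e3))
    simpa [ContinuousLinearMap.comp_apply, ContinuousLinearMap.smul_apply,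
      smul_eq_mul, _root_.map_smul] using this
  ext i j
  have := key (Matrix.single i j 1)
  have hσh : σ ^ (h - 1) = σ ^ h / σ := by
    rw [Real.rpow_sub hσ, Real.rpow_one]
  simp only [PK, Matrix.smul_apply, Matrix.of_apply, smul_eq_mul, hσh]
  field_simp
  linarith [this]

lemma jac_smul (c : ℝ) (hc : c ≠ 0) (φ : V3 → V3) (z : V3) :
    jac (fun z' => c • φ z') z = c • jac φ z := by
  ext i j
  have hfun : (fun z' => (c • φ z') i) = fun z' => c * φ z' i := by
    funext z'; simp [smul_eq_mul]
  simp only [jac, Matrix.smul_apply, Matrix.of_apply, hfun, smul_eq_mul,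
    fderiv_const_mul_ne c hc, ContinuousLinearMap.smul_apply]

lemma jacIn_smul (c : ℝ) (φ : V3 → V3) {s : Set V3} {y : V3}
    (hs : UniqueDiffWithinAt ℝ s y) (hφ : DifferentiableWithinAt ℝ φ s y) :
    jacIn (fun z' => c • φ z') s y = c • jacIn φ s y := by
  ext i j
  have hcomp : DifferentiableWithinAt ℝ (fun z => φ z i) s y :=
    (EuclideanSpace.proj (𝕜 := ℝ) i).differentiableAt.comp_differentiableWithinAt y hφ
  have hfun : (fun z' => (c • φ z') i) = fun z' => c • (φ z' i) := rfl
  simp only [jacIn, Matrix.smul_apply, Matrix.of_apply, hfun,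
    fderivWithin_fun_const_smul hs hcomp c, ContinuousLinearMap.smul_apply]

/-- A separable motion `x(t,y) = a(t) φ(y)` built from a positive solution of
`ä = μ a^{h-1}` and an eigenfunction `φ` of the elastic operator with vacuum boundary
condition satisfies the equations of elastodynamics with the vacuum boundary condition. -/
theorem separable_motion_solves_elastodynamics
    (W : Mat3 → ℝ) (h : ℝ)
    (hW0 : ∀ F : Mat3, GLpos F → 0 ≤ W F)
    (hWC2 : ContDiffOn ℝ 2 W {F : Mat3 | GLpos F})
    (hWhom : HomDeg W h)
    (τ μ : ℝ) (hτ : 0 < τ)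
    (a : ℝ → ℝ)
    (haC2 : ContDiffOn ℝ 2 a (Set.Ico 0 τ))
    (hapos : ∀ t ∈ Set.Ico (0:ℝ) τ, 0 < a t)
    (hODE : ∀ t ∈ Set.Ico (0:ℝ) τ,
      derivWithin (derivWithin a (Set.Ico 0 τ)) (Set.Ico 0 τ) t = μ * a t ^ (h - 1))
    (φ : V3 → V3)
    (hφC2 : ContDiffOn ℝ 2 φ (Metric.ball (0:V3) 1))
    (hφC1 : ContDiffOn ℝ 1 φ (Metric.closedBall (0:V3) 1))
    (hφGL : ∀ y ∈ Metric.closedBall (0:V3) 1, GLpos (jacIn φ (Metric.closedBall 0 1) y))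
    (hEig : ∀ y ∈ Metric.ball (0:V3) 1,
      divMat (fun z => PK W (jac φ z)) y = μ • φ y)
    (hBC : ∀ y : V3, ‖y‖ = 1 → (PK W (jacIn φ (Metric.closedBall 0 1) y)).mulVec (fun j => y j) = 0) :
    (∀ t ∈ Set.Ico (0:ℝ) τ, ∀ y ∈ Metric.ball (0:V3) 1,
      derivWithin (derivWithin (fun s : ℝ => a s • φ y) (Set.Ico 0 τ)) (Set.Ico 0 τ) t
        = divMat (fun z => PK W (jac (fun z' => a t • φ z') z)) y) ∧
    (∀ t ∈ Set.Ico (0:ℝ) τ, ∀ y : V3, ‖y‖ = 1 →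
      (PK W (jacIn (fun z' => a t • φ z') (Metric.closedBall 0 1) y)).mulVec (fun j => y j) = 0) := by
  have hI : UniqueDiffOn ℝ (Set.Ico (0:ℝ) τ) := uniqueDiffOn_Ico 0 τ
  have hcB : UniqueDiffOn ℝ (Metric.closedBall (0:V3) 1) :=
    uniqueDiffOn_convex (convex_closedBall _ _)
      (by rw [interior_closedBall _ one_ne_zero]; exact ⟨0, by simp⟩)
  have hjaceq : ∀ z ∈ Metric.ball (0:V3) 1,
      jac φ z = jacIn φ (Metric.closedBall 0 1) z := by
    intro z hz
    ext i j
    simp only [jac, jacIn, Matrix.of_apply]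
    rw [fderivWithin_of_mem_nhds
      (Filter.mem_of_superset (Metric.isOpen_ball.mem_nhds hz) Metric.ball_subset_closedBall)]
  have hGLb : ∀ z ∈ Metric.ball (0:V3) 1, GLpos (jac φ z) := by
    intro z hz
    rw [hjaceq z hz]
    exact hφGL z (Metric.ball_subset_closedBall hz)
  constructor
  · intro t ht y hy
    have hat : 0 < a t := hapos t ht
    have hane : (a t) ^ (h - 1) ≠ 0 := (Real.rpow_pos_of_pos hat _).ne'
    have hda : DifferentiableOn ℝ a (Set.Ico 0 τ) := haC2.differentiableOn two_ne_zero
    have hda' : DifferentiableOn ℝ (derivWithin a (Set.Ico 0 τ)) (Set.Ico 0 τ) :=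
      (haC2.derivWithin hI (m := 1) (by norm_num)).differentiableOn one_ne_zero
    have hE1 : Set.EqOn (derivWithin (fun s : ℝ => a s • φ y) (Set.Ico 0 τ))
        (fun s => derivWithin a (Set.Ico 0 τ) s • φ y) (Set.Ico 0 τ) := fun s hs =>
      derivWithin_smul_const (hda s hs) _
    have hLHS : derivWithin (derivWithin (fun s : ℝ => a s • φ y) (Set.Ico 0 τ)) (Set.Ico 0 τ) t
        = (μ * a t ^ (h - 1)) • φ y := by
      rw [derivWithin_congr hE1 (hE1 ht),
        derivWithin_smul_const (hda' t ht), hODE t ht]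
    rw [hLHS]
    have hkey : ∀ z ∈ Metric.ball (0:V3) 1,
        PK W (jac (fun z' => a t • φ z') z) = (a t) ^ (h - 1) • PK W (jac φ z) := by
      intro z hz
      rw [jac_smul (a t) hat.ne' φ z, PK_smul W h hWC2 hWhom (hGLb z hz) hat]
    have hdiv : divMat (fun z => PK W (jac (fun z' => a t • φ z') z)) y
        = (a t) ^ (h - 1) • divMat (fun z => PK W (jac φ z)) y := by
      ext i
      show (∑ j : Fin 3, fderiv ℝ (fun z => PK W (jac (fun z' => a t • φ z') z) i j) y
          (EuclideanSpace.single j 1))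
        = (a t) ^ (h - 1) * ∑ j : Fin 3, fderiv ℝ (fun z => PK W (jac φ z) i j) y
          (EuclideanSpace.single j 1)
      rw [Finset.mul_sum]
      refine Finset.sum_congr rfl fun j _ => ?_
      have hfd : fderiv ℝ (fun z => PK W (jac (fun z' => a t • φ z') z) i j) y
          = fderiv ℝ (fun z => (a t) ^ (h - 1) * PK W (jac φ z) i j) y := by
        apply Filter.EventuallyEq.fderiv_eq
        filter_upwards [Metric.isOpen_ball.mem_nhds hy] with z hz
        rw [hkey z hz, Matrix.smul_apply, smul_eq_mul]
      rw [hfd, fderiv_const_mul_ne _ hane, ContinuousLinearMap.smul_apply, smul_eq_mul]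
    rw [hdiv, hEig y hy, smul_smul, mul_comm]
  · intro t ht y hy
    have hat : 0 < a t := hapos t ht
    have hymem : y ∈ Metric.closedBall (0:V3) 1 := mem_closedBall_zero_iff.2 hy.le
    rw [jacIn_smul (a t) φ (hcB y hymem) (hφC1.differentiableOn one_ne_zero y hymem),
      PK_smul W h hWC2 hWhom (hφGL y hymem) hat, Matrix.smul_mulVec, hBC y hy, smul_zero]
end
end

section
/- Let h > 1 and μ < 0. For every pair (a₀, a₁) ∈ ℝ₊ × ℝ, the maximal strictly positive C² solution a : [0,τ) → ℝ₊ of the initial value problem ä(t) = μ a(t)^{h−1}, a(0) = a₀, ȧ(0) = a₁, has finite lifespan τ < ∞, and a(t) → 0 as t → τ⁻. -/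
open Set Filter Topology

noncomputable section

private lemma deriv_facts {μ p : ℝ} {s : Set ℝ} (hs : UniqueDiffOn ℝ s) {a : ℝ → ℝ}
    (ha : ContDiffOn ℝ 2 a s)
    (hode : ∀ t ∈ s, derivWithin (derivWithin a s) s t = μ * a t ^ p) :
    (∀ t ∈ s, HasDerivWithinAt a (derivWithin a s t) s t) ∧
      (∀ t ∈ s, HasDerivWithinAt (derivWithin a s) (μ * a t ^ p) s t) ∧
      ContinuousOn (derivWithin a s) s := by
  have hd1 : ContDiffOn ℝ 1 (derivWithin a s) s := ha.derivWithin hs (by norm_num)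
  have hdiff : DifferentiableOn ℝ a s := ha.differentiableOn (by norm_num)
  have hdiff' : DifferentiableOn ℝ (derivWithin a s) s := hd1.differentiableOn (by norm_num)
  refine ⟨fun t ht => (hdiff t ht).hasDerivWithinAt, fun t ht => ?_, hd1.continuousOn⟩
  have h2 := (hdiff' t ht).hasDerivWithinAt
  rwa [hode t ht] at h2

private lemma le_linear_of_deriv_le {s : Set ℝ} (hconv : Convex ℝ s) {f f' : ℝ → ℝ} {C : ℝ}
    (hf : ContinuousOn f s) (hdiff : ∀ t ∈ interior s, HasDerivAt f (f' t) t)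
    (hle : ∀ t ∈ interior s, f' t ≤ C) :
    ∀ x ∈ s, ∀ y ∈ s, x ≤ y → f y ≤ f x + C * (y - x) := by
  intro x hx y hy hxy
  have hanti : AntitoneOn (fun t => f t - C * t) s := by
    apply antitoneOn_of_deriv_nonpos hconv
      (hf.sub (continuous_const.mul continuous_id).continuousOn)
    · intro t ht
      exact ((hdiff t ht).sub ((hasDerivAt_id t).const_mul C)).differentiableAt.differentiableWithinAt
    · intro t ht
      rw [show deriv (f - (fun x => C) * id) t = f' t - C * 1 from ((hdiff t ht).sub ((hasDerivAt_id t).const_mul C)).deriv]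
      have := hle t ht
      simp only [mul_one]
      linarith
  have h2 := hanti hx hy hxy
  simp only at h2
  linarith

private lemma ge_linear_of_deriv_ge {s : Set ℝ} (hconv : Convex ℝ s) {f f' : ℝ → ℝ} {C : ℝ}
    (hf : ContinuousOn f s) (hdiff : ∀ t ∈ interior s, HasDerivAt f (f' t) t)
    (hge : ∀ t ∈ interior s, C ≤ f' t) :
    ∀ x ∈ s, ∀ y ∈ s, x ≤ y → f x + C * (y - x) ≤ f y := by
  intro x hx y hy hxy
  have h2 := le_linear_of_deriv_le hconv (f := fun t => -f t) (f' := fun t => -f' t) (C := -C)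
    hf.neg (fun t ht => (hdiff t ht).neg) (fun t ht => neg_le_neg (hge t ht)) x hx y hy hxy
  linarith


/-- For `h > 1`, `μ < 0`, there is no global positive C² solution of
`ä = μ a^{h−1}` (so the maximal lifespan `τ` is finite), and any maximal positive
C² solution on `[0,τ)` collapses: `a(t) → 0` as `t → τ⁻`. -/
theorem finite_time_collapse
    (h μ : ℝ) (hh : 1 < h) (hμ : μ < 0) :
    ∀ a₀ a₁ : ℝ, 0 < a₀ →
      -- the lifespan is finite: there is no global positive solution on [0,∞)
      (¬ ∃ a : ℝ → ℝ,
        ContDiffOn ℝ 2 a (Set.Ici 0) ∧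
        (∀ t ∈ Set.Ici (0:ℝ), 0 < a t) ∧
        a 0 = a₀ ∧ derivWithin a (Set.Ici 0) 0 = a₁ ∧
        (∀ t ∈ Set.Ici (0:ℝ),
          derivWithin (derivWithin a (Set.Ici 0)) (Set.Ici 0) t = μ * a t ^ (h - 1))) ∧
      -- any maximal positive solution on a finite interval [0,τ) tends to 0 at τ
      (∀ τ : ℝ, 0 < τ → ∀ a : ℝ → ℝ,
        ContDiffOn ℝ 2 a (Set.Ico 0 τ) →
        (∀ t ∈ Set.Ico (0:ℝ) τ, 0 < a t) →
        a 0 = a₀ →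
        derivWithin a (Set.Ico 0 τ) 0 = a₁ →
        (∀ t ∈ Set.Ico (0:ℝ) τ,
          derivWithin (derivWithin a (Set.Ico 0 τ)) (Set.Ico 0 τ) t = μ * a t ^ (h - 1)) →
        -- maximality: no positive C² solution on a strictly larger interval extends a
        (∀ τ' : ℝ, τ < τ' →
          ¬ ∃ b : ℝ → ℝ,
            ContDiffOn ℝ 2 b (Set.Ico 0 τ') ∧
            (∀ t ∈ Set.Ico (0:ℝ) τ', 0 < b t) ∧
            (∀ t ∈ Set.Ico (0:ℝ) τ, b t = a t) ∧
            (∀ t ∈ Set.Ico (0:ℝ) τ',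
              derivWithin (derivWithin b (Set.Ico 0 τ')) (Set.Ico 0 τ') t
                = μ * b t ^ (h - 1))) →
        Filter.Tendsto a (nhdsWithin τ (Set.Iio τ)) (nhds 0)) := by
  intro a₀ a₁ ha₀
  constructor
  · -- Part A: no global solution
      rintro ⟨a, ha2, hpos, ha0, ha1, hode⟩
      obtain ⟨hda, hda', hconta'⟩ := deriv_facts (uniqueDiffOn_Ici (0:ℝ)) ha2 hode
      set A' := derivWithin a (Set.Ici 0) with hA'def
      have hdaI : ∀ t ∈ interior (Set.Ici (0:ℝ)), HasDerivAt a (A' t) t := by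
        intro t ht
        rw [interior_Ici, Set.mem_Ioi] at ht
        exact (hda t (Set.mem_Ici.mpr (le_of_lt ht))).hasDerivAt (Ici_mem_nhds ht)
      have hdaI' : ∀ t ∈ interior (Set.Ici (0:ℝ)), HasDerivAt A' (μ * a t ^ (h - 1)) t := by
        intro t ht
        rw [interior_Ici, Set.mem_Ioi] at ht
        exact (hda' t (Set.mem_Ici.mpr (le_of_lt ht))).hasDerivAt (Ici_mem_nhds ht)
      have hcont : ContinuousOn a (Set.Ici 0) := ha2.continuousOn
      have hanti : AntitoneOn A' (Set.Ici 0) := by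
        apply antitoneOn_of_deriv_nonpos (convex_Ici 0) hconta'
        · exact fun t ht => (hdaI' t ht).differentiableAt.differentiableWithinAt
        · intro t ht
          rw [(hdaI' t ht).deriv]
          have h1 : (0:ℝ) < a t ^ (h - 1) := by
            rw [interior_Ici, Set.mem_Ioi] at ht
            exact Real.rpow_pos_of_pos (hpos t (Set.mem_Ici.mpr (le_of_lt ht))) _
          nlinarith
      -- A' is nonnegative
      have hnn : ∀ t ∈ Set.Ici (0:ℝ), 0 ≤ A' t := by
        by_contra hcon
        push_neg at hcon
        obtain ⟨t₀, ht₀, hneg⟩ := hcon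
        set T := t₀ + (a t₀ + 1) / (-A' t₀) with hT
        have hq : 0 < (a t₀ + 1) / (-A' t₀) :=
          div_pos (by have := hpos t₀ ht₀; linarith) (by linarith)
        have hTt₀ : t₀ ≤ T := by simp only [hT]; linarith
        have hTs : T ∈ Set.Ici (0:ℝ) := le_trans ht₀ hTt₀
        have hbound := le_linear_of_deriv_le (convex_Ici t₀) (f := a) (f' := A') (C := A' t₀)
          (hcont.mono (Ici_subset_Ici.2 ht₀))
          (fun t ht => by
            rw [interior_Ici, Set.mem_Ioi] at ht
            exact hdaI t (by rw [interior_Ici, Set.mem_Ioi]; exact lt_of_le_of_lt (Set.mem_Ici.mp ht₀) ht))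
          (fun t ht => by
            rw [interior_Ici, Set.mem_Ioi] at ht
            exact hanti ht₀ (Set.mem_Ici.mpr (le_trans (Set.mem_Ici.mp ht₀) (le_of_lt ht))) (le_of_lt ht))
          t₀ self_mem_Ici T hTt₀ hTt₀
        have hne : A' t₀ ≠ 0 := ne_of_lt hneg
        have := hpos T hTs
        rw [show T - t₀ = (a t₀ + 1) / (-A' t₀) by rw [hT]; ring] at hbound
        have hcomp2 : A' t₀ * ((a t₀ + 1) / (-A' t₀)) = -(a t₀ + 1) := by
          rw [← mul_div_assoc, mul_comm, mul_div_assoc, div_neg, div_self hne]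
          ring
        rw [hcomp2] at hbound
        linarith
      -- a is monotone, so a t ≥ a₀
      have hmono : MonotoneOn a (Set.Ici 0) :=
        monotoneOn_of_deriv_nonneg (convex_Ici 0) hcont
          (fun t ht => (hdaI t ht).differentiableAt.differentiableWithinAt)
          (fun t ht => by
            rw [(hdaI t ht).deriv]
            rw [interior_Ici, Set.mem_Ioi] at ht
            exact hnn t (Set.mem_Ici.mpr (le_of_lt ht)))
      set C := μ * a₀ ^ (h - 1) with hCdef
      have hC : C < 0 := mul_neg_of_neg_of_pos hμ (Real.rpow_pos_of_pos ha₀ _)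
      have hCb : ∀ t ∈ interior (Set.Ici (0:ℝ)), μ * a t ^ (h - 1) ≤ C := by
        intro t ht
        rw [interior_Ici, Set.mem_Ioi] at ht
        have h1 : a₀ ≤ a t := by
          rw [← ha0]
          exact hmono self_mem_Ici (Set.mem_Ici.mpr (le_of_lt ht)) (le_of_lt ht)
        have h2 : a₀ ^ (h - 1) ≤ a t ^ (h - 1) := Real.rpow_le_rpow ha₀.le h1 (by linarith)
        nlinarith
      set T := (|a₁| + 1) / (-C) with hTdef
      have hT : 0 < T := div_pos (by positivity) (by linarith)
      have hbound := le_linear_of_deriv_le (convex_Ici 0) hconta' hdaI' hCb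
        0 self_mem_Ici T (le_of_lt hT) (le_of_lt hT)
      have hCne : C ≠ 0 := ne_of_lt hC
      have hCT : C * (T - 0) = -(|a₁| + 1) := by
        rw [sub_zero, hTdef, ← mul_div_assoc, mul_comm, mul_div_assoc, div_neg, div_self hCne]
        ring
      have h3 := hnn T (le_of_lt hT)
      have h4 : a₁ ≤ |a₁| := le_abs_self a₁
      rw [ha1, hCT] at hbound
      linarith
  · -- Part B: collapse at finite maximal time
    intro τ hτ a ha2 hpos ha0 ha1 hode hmax
    have husd := uniqueDiffOn_Ico (0:ℝ) τ
    obtain ⟨hda, hda', hconta'⟩ := deriv_facts husd ha2 hode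
    set A' := derivWithin a (Set.Ico 0 τ) with hA'def
    have hintIco : interior (Set.Ico (0:ℝ) τ) = Set.Ioo 0 τ := interior_Ico
    have hdaI : ∀ t ∈ Set.Ioo (0:ℝ) τ, HasDerivAt a (A' t) t :=
      fun t ht => (hda t (Ioo_subset_Ico_self ht)).hasDerivAt (Ico_mem_nhds ht.1 ht.2)
    have hdaI' : ∀ t ∈ Set.Ioo (0:ℝ) τ, HasDerivAt A' (μ * a t ^ (h - 1)) t :=
      fun t ht => (hda' t (Ioo_subset_Ico_self ht)).hasDerivAt (Ico_mem_nhds ht.1 ht.2)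
    have hcont : ContinuousOn a (Set.Ico 0 τ) := ha2.continuousOn
    have hanti : AntitoneOn A' (Set.Ico 0 τ) := by
      apply antitoneOn_of_deriv_nonpos (convex_Ico 0 τ) hconta'
      · rw [hintIco]
        exact fun t ht => (hdaI' t ht).differentiableAt.differentiableWithinAt
      · rw [hintIco]
        intro t ht
        rw [(hdaI' t ht).deriv]
        have h1 : (0:ℝ) < a t ^ (h - 1) :=
          Real.rpow_pos_of_pos (hpos t (Ioo_subset_Ico_self ht)) _
        nlinarith
    have h0mem : (0:ℝ) ∈ Set.Ico (0:ℝ) τ := ⟨le_rfl, hτ⟩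
    have hA'le : ∀ t ∈ Set.Ico (0:ℝ) τ, A' t ≤ a₁ := by
      intro t ht
      have h2 := hanti h0mem ht ht.1
      rwa [ha1] at h2
    set M := a₀ + |a₁| * τ with hMdef
    have hMpos : 0 < M := by nlinarith [abs_nonneg a₁]
    have hub : ∀ t ∈ Set.Ico (0:ℝ) τ, a t ≤ M := by
      intro t ht
      have hb := le_linear_of_deriv_le (convex_Ico 0 τ) hcont
        (fun u hu => by rw [hintIco] at hu; exact hdaI u hu)
        (fun u hu => by rw [hintIco] at hu; exact hA'le u (Ioo_subset_Ico_self hu))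
        0 h0mem t ht ht.1
      rw [ha0] at hb
      have h1 : a₁ * (t - 0) ≤ |a₁| * τ := by
        rw [sub_zero]
        calc a₁ * t ≤ |a₁| * t := mul_le_mul_of_nonneg_right (le_abs_self a₁) ht.1
          _ ≤ |a₁| * τ := mul_le_mul_of_nonneg_left ht.2.le (abs_nonneg a₁)
      linarith
    set CB := μ * M ^ (h - 1) with hCBdef
    have hCB : CB < 0 := mul_neg_of_neg_of_pos hμ (Real.rpow_pos_of_pos hMpos _)
    have hlow : ∀ t ∈ Set.Ico (0:ℝ) τ, CB ≤ μ * a t ^ (h - 1) := by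
      intro t ht
      have h2 : a t ^ (h - 1) ≤ M ^ (h - 1) :=
        Real.rpow_le_rpow (hpos t ht).le (hub t ht) (by linarith)
      nlinarith
    set m := a₁ + CB * τ with hmdef
    have hlb : ∀ t ∈ Set.Ico (0:ℝ) τ, m ≤ A' t := by
      intro t ht
      have hb := ge_linear_of_deriv_ge (convex_Ico 0 τ) hconta'
        (fun u hu => by rw [hintIco] at hu; exact hdaI' u hu)
        (fun u hu => by rw [hintIco] at hu; exact hlow u (Ioo_subset_Ico_self hu))
        0 h0mem t ht ht.1
      rw [ha1] at hb
      have h2 : CB * τ ≤ CB * (t - 0) := by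
        rw [sub_zero]
        exact mul_le_mul_of_nonpos_left ht.2.le hCB.le
      linarith
    have hIooNe : (Set.Ioo (0:ℝ) τ).Nonempty := nonempty_Ioo.2 hτ
    have hbddB : BddBelow (A' '' Set.Ioo 0 τ) := by
      refine ⟨m, ?_⟩
      rintro x ⟨t, ht, rfl⟩
      exact hlb t (Ioo_subset_Ico_self ht)
    set L := sInf (A' '' Set.Ioo 0 τ) with hLdef
    have hLlim : Tendsto A' (𝓝[<] τ) (𝓝 L) :=
      AntitoneOn.tendsto_nhdsWithin_Ioo_left hIooNe (hanti.mono Ioo_subset_Ico_self) hbddB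
    set g := fun t => a t - m * t with hgdef
    have hgmono : MonotoneOn g (Set.Ico 0 τ) := by
      apply monotoneOn_of_deriv_nonneg (convex_Ico 0 τ)
        (hcont.sub (continuous_const.mul continuous_id).continuousOn)
      · rw [hintIco]
        intro t ht
        exact ((hdaI t ht).sub
          ((hasDerivAt_id t).const_mul m)).differentiableAt.differentiableWithinAt
      · rw [hintIco]
        intro t ht
        rw [show deriv (a - (fun x => a₁ + CB * τ) * id) t = A' t - m * 1 from ((hdaI t ht).sub ((hasDerivAt_id t).const_mul m)).deriv]
        have h2 := hlb t (Ioo_subset_Ico_self ht)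
        simp only [mul_one]
        linarith
    have hbddA : BddAbove (g '' Set.Ioo 0 τ) := by
      refine ⟨M + |m| * τ, ?_⟩
      rintro x ⟨t, ht, rfl⟩
      have h1 := hub t (Ioo_subset_Ico_self ht)
      have h2 : -m ≤ |m| := neg_le_abs m
      have h3 : (-m) * t ≤ |m| * t := mul_le_mul_of_nonneg_right h2 ht.1.le
      have h4 : |m| * t ≤ |m| * τ := mul_le_mul_of_nonneg_left ht.2.le (abs_nonneg m)
      simp only [hgdef]
      linarith
    set G := sSup (g '' Set.Ioo 0 τ) with hGdef
    have hGlim : Tendsto g (𝓝[<] τ) (𝓝 G) :=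
      MonotoneOn.tendsto_nhdsWithin_Ioo_left hIooNe (hgmono.mono Ioo_subset_Ico_self) hbddA
    set A := G + m * τ with hAdef
    have hTendA : Tendsto a (𝓝[<] τ) (𝓝 A) := by
      have h2 : Tendsto (fun t => m * t) (𝓝[<] τ) (𝓝 (m * τ)) :=
        ((continuous_const.mul continuous_id).tendsto τ).mono_left nhdsWithin_le_nhds
      have h3 := hGlim.add h2
      refine h3.congr fun t => ?_
      simp [hgdef]
    have hA0 : 0 ≤ A := by
      refine ge_of_tendsto hTendA ?_
      filter_upwards [Ioo_mem_nhdsLT hτ] with t ht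
      exact (hpos t (Ioo_subset_Ico_self ht)).le
    rcases hA0.eq_or_lt with hAeq | hApos
    · rw [← hAeq] at hTendA
      exact hTendA
    exfalso
    -- local solution of the system around (A, L) at time τ
    set V : ℝ × ℝ → ℝ × ℝ := fun p => (p.2, μ * p.1 ^ (h - 1)) with hVdef
    have hV : ContDiffAt ℝ 1 V (A, L) := by
      apply ContDiffAt.prodMk
      · exact contDiffAt_snd
      · exact contDiffAt_const.mul
          ((Real.contDiffAt_rpow_const_of_ne (ne_of_gt hApos)).comp (A, L) contDiffAt_fst)
    obtain ⟨f, hfτ, ε, hε, hf⟩ := hV.exists_forall_mem_closedBall_exists_eq_forall_mem_Ioo_hasDerivAt₀ τ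
    set c : ℝ → ℝ := fun t => (f t).1 with hcdef
    set d : ℝ → ℝ := fun t => (f t).2 with hddef
    have hcτ : c τ = A := by rw [hcdef]; simp [hfτ]
    have hdτ : d τ = L := by rw [hddef]; simp [hfτ]
    have hτIoo : τ ∈ Set.Ioo (τ - ε) (τ + ε) := ⟨by linarith, by linarith⟩
    have hc : ∀ t ∈ Set.Ioo (τ - ε) (τ + ε), HasDerivAt c (d t) t := by
      intro t ht
      have h2 := (ContinuousLinearMap.fst ℝ ℝ ℝ).hasFDerivAt.comp_hasDerivAt t (hf t ht)
      simpa [hcdef, hddef, hVdef, Function.comp_def] using h2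
    have hd : ∀ t ∈ Set.Ioo (τ - ε) (τ + ε), HasDerivAt d (μ * c t ^ (h - 1)) t := by
      intro t ht
      have h2 := (ContinuousLinearMap.snd ℝ ℝ ℝ).hasFDerivAt.comp_hasDerivAt t (hf t ht)
      simpa [hcdef, hddef, hVdef, Function.comp_def] using h2
    have hc_cont : ContinuousAt c τ := (hc τ hτIoo).continuousAt
    have hevpos : ∀ᶠ t in 𝓝 τ, 0 < c t := by
      have h2 : Tendsto c (𝓝 τ) (𝓝 A) := hcτ ▸ hc_cont
      exact h2.eventually (eventually_gt_nhds hApos)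
    obtain ⟨δ, hδ, hball⟩ := Metric.eventually_nhds_iff.mp hevpos
    set τ' := τ + min δ ε / 2 with hτ'def
    have hminpos : 0 < min δ ε := lt_min hδ hε
    have hττ' : τ < τ' := by rw [hτ'def]; linarith
    have hsub : ∀ t, τ ≤ t → t < τ' → t ∈ Set.Ioo (τ - ε) (τ + ε) := by
      intro t h1 h2
      have h3 : min δ ε ≤ ε := min_le_right δ ε
      rw [hτ'def] at h2
      exact ⟨by linarith, by linarith⟩
    have hcpos : ∀ t, τ ≤ t → t < τ' → 0 < c t := by
      intro t h1 h2
      apply hball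
      rw [Real.dist_eq, abs_sub_lt_iff]
      have h3 : min δ ε ≤ δ := min_le_left δ ε
      rw [hτ'def] at h2
      exact ⟨by linarith, by linarith⟩
    set b : ℝ → ℝ := fun t => if t < τ then a t else c t with hbdef
    set b' : ℝ → ℝ := fun t => if t < τ then A' t else d t with hb'def
    have hba : ∀ t, t < τ → b t = a t := fun t ht => if_pos ht
    have hb'a : ∀ t, t < τ → b' t = A' t := fun t ht => if_pos ht
    have hbc : ∀ t, τ ≤ t → b t = c t := fun t ht => if_neg (not_lt.2 ht)
    have hb'd : ∀ t, τ ≤ t → b' t = d t := fun t ht => if_neg (not_lt.2 ht)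
    have hbEv : ∀ t ∈ Set.Ioo (0:ℝ) τ, b =ᶠ[𝓝 t] a :=
      fun t ht => eventuallyEq_of_mem (Iio_mem_nhds ht.2) (fun x hx => hba x hx)
    have hb'Ev : ∀ t ∈ Set.Ioo (0:ℝ) τ, b' =ᶠ[𝓝 t] A' :=
      fun t ht => eventuallyEq_of_mem (Iio_mem_nhds ht.2) (fun x hx => hb'a x hx)
    have hDb : ∀ t ∈ Set.Ioo (0:ℝ) τ, HasDerivAt b (A' t) t :=
      fun t ht => (hdaI t ht).congr_of_eventuallyEq (hbEv t ht)
    have hDb' : ∀ t ∈ Set.Ioo (0:ℝ) τ, HasDerivAt b' (μ * a t ^ (h - 1)) t :=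
      fun t ht => (hdaI' t ht).congr_of_eventuallyEq (hb'Ev t ht)
    have hIooNhd : Set.Ioo (0:ℝ) τ ∈ 𝓝[<] τ := Ioo_mem_nhdsLT hτ
    have hTendb : Tendsto b (𝓝[<] τ) (𝓝 A) := by
      refine hTendA.congr' ?_
      filter_upwards [Ioo_mem_nhdsLT hτ] with t ht
      exact (hba t ht.2).symm
    have hTendb' : Tendsto b' (𝓝[<] τ) (𝓝 L) := by
      refine hLlim.congr' ?_
      filter_upwards [Ioo_mem_nhdsLT hτ] with t ht
      exact (hb'a t ht.2).symm
    have hbτleft : HasDerivWithinAt b L (Set.Iic τ) τ := by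
      apply hasDerivWithinAt_Iic_of_tendsto_deriv (s := Set.Ioo 0 τ)
      · exact fun t ht => (hDb t ht).differentiableAt.differentiableWithinAt
      · have hbτval : b τ = A := by rw [hbc τ le_rfl, hcτ]
        unfold ContinuousWithinAt
        rw [hbτval]
        exact hTendb.mono_left (nhdsWithin_mono τ Ioo_subset_Iio_self)
      · exact hIooNhd
      · refine Tendsto.congr' ?_ hTendb'
        filter_upwards [hIooNhd] with t ht
        rw [hb'a t ht.2]
        exact ((hDb t ht).deriv).symm
    have hbτright : HasDerivWithinAt b L (Set.Ici τ) τ := by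
      have h2 := (hc τ hτIoo).hasDerivWithinAt (s := Set.Ici τ)
      rw [hdτ] at h2
      exact h2.congr (fun x hx => hbc x hx) (hbc τ le_rfl)
    have hbτD : HasDerivAt b L τ := by
      have h3 := hbτleft.union hbτright
      rwa [Iic_union_Ici, hasDerivWithinAt_univ] at h3
    have hb'τleft : HasDerivWithinAt b' (μ * A ^ (h - 1)) (Set.Iic τ) τ := by
      apply hasDerivWithinAt_Iic_of_tendsto_deriv (s := Set.Ioo 0 τ)
      · exact fun t ht => (hDb' t ht).differentiableAt.differentiableWithinAt
      · have hb'τval : b' τ = L := by rw [hb'd τ le_rfl, hdτ]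
        unfold ContinuousWithinAt
        rw [hb'τval]
        exact hTendb'.mono_left (nhdsWithin_mono τ Ioo_subset_Iio_self)
      · exact hIooNhd
      · have htt : Tendsto (fun t => μ * a t ^ (h - 1)) (𝓝[<] τ) (𝓝 (μ * A ^ (h - 1))) :=
          tendsto_const_nhds.mul (hTendA.rpow_const (Or.inr (by linarith)))
        refine Tendsto.congr' ?_ htt
        filter_upwards [hIooNhd] with t ht
        exact ((hDb' t ht).deriv).symm
    have hb'τright : HasDerivWithinAt b' (μ * A ^ (h - 1)) (Set.Ici τ) τ := by
      have h2 := (hd τ hτIoo).hasDerivWithinAt (s := Set.Ici τ)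
      rw [hcτ] at h2
      exact h2.congr (fun x hx => hb'd x hx) (hb'd τ le_rfl)
    have hb'τD : HasDerivAt b' (μ * A ^ (h - 1)) τ := by
      have h3 := hb'τleft.union hb'τright
      rwa [Iic_union_Ici, hasDerivWithinAt_univ] at h3
    have husd' := uniqueDiffOn_Ico (0:ℝ) τ'
    have hIcomem : ∀ t, t < τ → Set.Ico (0:ℝ) τ ∈ 𝓝[Set.Ico (0:ℝ) τ'] t := by
      intro t hlt
      have h2 := inter_mem_nhdsWithin (Set.Ico (0:ℝ) τ') (Iio_mem_nhds hlt)
      refine mem_of_superset h2 ?_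
      rintro x ⟨hx1, hx2⟩
      exact ⟨hx1.1, hx2⟩
    have hbpos' : ∀ t ∈ Set.Ico (0:ℝ) τ', 0 < b t := by
      intro t ht
      rcases lt_or_ge t τ with hlt | hge
      · rw [hba t hlt]; exact hpos t ⟨ht.1, hlt⟩
      · rw [hbc t hge]; exact hcpos t hge ht.2
    have hbw : ∀ t ∈ Set.Ico (0:ℝ) τ', HasDerivWithinAt b (b' t) (Set.Ico (0:ℝ) τ') t := by
      intro t ht
      rcases lt_trichotomy t τ with hlt | heq | hgt
      · rw [hb'a t hlt]
        have h1 := (hda t ⟨ht.1, hlt⟩).mono_of_mem_nhdsWithin (hIcomem t hlt)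
        exact h1.congr_of_eventuallyEq
          (eventuallyEq_of_mem (mem_nhdsWithin_of_mem_nhds (Iio_mem_nhds hlt))
            fun x hx => hba x hx)
          (hba t hlt)
      · subst heq
        rw [hb'd t le_rfl, hdτ]
        exact hbτD.hasDerivWithinAt
      · rw [hb'd t hgt.le]
        have h1 := (hc t (hsub t hgt.le ht.2)).hasDerivWithinAt (s := Set.Ico (0:ℝ) τ')
        exact h1.congr_of_eventuallyEq
          (eventuallyEq_of_mem (mem_nhdsWithin_of_mem_nhds (Ioi_mem_nhds hgt))
            fun x hx => hbc x (le_of_lt hx))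
          (hbc t hgt.le)
    have hb'w : ∀ t ∈ Set.Ico (0:ℝ) τ', HasDerivWithinAt b' (μ * b t ^ (h - 1))
        (Set.Ico (0:ℝ) τ') t := by
      intro t ht
      rcases lt_trichotomy t τ with hlt | heq | hgt
      · rw [hba t hlt]
        have h1 := (hda' t ⟨ht.1, hlt⟩).mono_of_mem_nhdsWithin (hIcomem t hlt)
        exact h1.congr_of_eventuallyEq
          (eventuallyEq_of_mem (mem_nhdsWithin_of_mem_nhds (Iio_mem_nhds hlt))
            fun x hx => hb'a x hx)
          (hb'a t hlt)
      · subst heq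
        rw [hbc t le_rfl, hcτ]
        exact hb'τD.hasDerivWithinAt
      · rw [hbc t hgt.le]
        have h1 := (hd t (hsub t hgt.le ht.2)).hasDerivWithinAt (s := Set.Ico (0:ℝ) τ')
        exact h1.congr_of_eventuallyEq
          (eventuallyEq_of_mem (mem_nhdsWithin_of_mem_nhds (Ioi_mem_nhds hgt))
            fun x hx => hb'd x (le_of_lt hx))
          (hb'd t hgt.le)
    have hdw : ∀ t ∈ Set.Ico (0:ℝ) τ', derivWithin b (Set.Ico (0:ℝ) τ') t = b' t :=
      fun t ht => (hbw t ht).derivWithin (husd' t ht)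
    have hdiffb : DifferentiableOn ℝ b (Set.Ico (0:ℝ) τ') :=
      fun t ht => (hbw t ht).differentiableWithinAt
    have hcontb : ContinuousOn b (Set.Ico (0:ℝ) τ') := hdiffb.continuousOn
    have hcd2 : ContDiffOn ℝ 2 b (Set.Ico (0:ℝ) τ') := by
      rw [show (2 : WithTop ℕ∞) = 1 + 1 by norm_num, contDiffOn_succ_iff_derivWithin husd']
      refine ⟨hdiffb, by simp, ?_⟩
      apply ContDiffOn.congr _ hdw
      rw [show (1 : WithTop ℕ∞) = 0 + 1 by norm_num, contDiffOn_succ_iff_derivWithin husd']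
      refine ⟨fun t ht => (hb'w t ht).differentiableWithinAt, by simp, ?_⟩
      rw [contDiffOn_zero]
      apply ContinuousOn.congr (f := fun t => μ * b t ^ (h - 1))
      · exact continuousOn_const.mul (hcontb.rpow_const (fun t ht => Or.inl (hbpos' t ht).ne'))
      · intro t ht
        exact (hb'w t ht).derivWithin (husd' t ht)
    have hode' : ∀ t ∈ Set.Ico (0:ℝ) τ',
        derivWithin (derivWithin b (Set.Ico (0:ℝ) τ')) (Set.Ico (0:ℝ) τ') t
          = μ * b t ^ (h - 1) := by
      intro t ht
      have h2 : derivWithin (derivWithin b (Set.Ico (0:ℝ) τ')) (Set.Ico (0:ℝ) τ') t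
          = derivWithin b' (Set.Ico (0:ℝ) τ') t :=
        derivWithin_congr hdw (hdw t ht)
      rw [h2, (hb'w t ht).derivWithin (husd' t ht)]
    exact hmax τ' hττ' ⟨b, hcd2, hbpos', fun t ht => hba t ht.2, hode'⟩
end
end

section
/- Let h ∈ ℝ, let f : ℝ₊ → ℝ₊ be C² with f'(1) = 0 and f''(u) ≥ 0 for all u ∈ ℝ₊, and define L : ℝ₊² → ℝ by L(λ₁,λ₂) = (λ₁λ₂²)^{h/3} f(λ₁/λ₂). Then for all λ₁, λ₂ ∈ ℝ₊ with λ₁ ≠ λ₂, the Baker–Ericksen quotient is nonnegative: ( λ₁ L,₁(λ) − (1/2) λ₂ L,₂(λ) ) / (λ₁ − λ₂) ≥ 0. -/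
open Set

noncomputable section

/-- The Baker–Ericksen quotient is nonnegative for
`L(λ₁,λ₂) = (λ₁λ₂²)^{h/3} f(λ₁/λ₂)` when `f'(1) = 0` and `f'' ≥ 0` on `ℝ₊`. -/
theorem baker_ericksen_inequality
    (h : ℝ) (f : ℝ → ℝ)
    (hfC2 : ContDiffOn ℝ 2 f (Set.Ioi 0))
    (hfpos : ∀ u : ℝ, 0 < u → 0 < f u)
    (hf'1 : deriv f 1 = 0)
    (hf'' : ∀ u : ℝ, 0 < u → 0 ≤ deriv (deriv f) u) :
    ∀ l1 l2 : ℝ, 0 < l1 → 0 < l2 → l1 ≠ l2 →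
      0 ≤ (l1 * deriv (fun s => (s * l2 ^ 2) ^ (h / 3) * f (s / l2)) l1
            - (1/2) * l2 * deriv (fun s => (l1 * s ^ 2) ^ (h / 3) * f (l1 / s)) l2)
          / (l1 - l2) := by
  intro l1 l2 hl1 hl2 hne
  have hu0 : (0:ℝ) < l1 / l2 := div_pos hl1 hl2
  set u := l1 / l2 with hu
  have hfd : ∀ x : ℝ, 0 < x → HasDerivAt f (deriv f x) x := by
    intro x hx
    exact ((hfC2.differentiableOn (by norm_num)).differentiableAt
      (isOpen_Ioi.mem_nhds hx)).hasDerivAt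
  have hP : (0:ℝ) < l1 * l2 ^ 2 := by positivity
  -- First partial derivative
  have h1 : HasDerivAt (fun s => (s * l2 ^ 2) ^ (h / 3) * f (s / l2))
      ((h/3) * (l1*l2^2)^(h/3-1) * l2^2 * f u
        + (l1*l2^2)^(h/3) * (deriv f u * (1/l2))) l1 := by
    have hinner : HasDerivAt (fun s : ℝ => s * l2^2) (l2^2) l1 := by
      simpa using (hasDerivAt_id l1).mul_const (l2^2)
    have hg : HasDerivAt (fun s => (s * l2^2)^(h/3))
        ((h/3) * (l1*l2^2)^(h/3-1) * l2^2) l1 := by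
      have := (Real.hasDerivAt_rpow_const (x := l1*l2^2) (p := h/3)
        (Or.inl hP.ne')).comp l1 hinner
      exact this.congr_deriv (by ring)
    have hinner2 : HasDerivAt (fun s : ℝ => s / l2) (1/l2) l1 := by
      simpa using (hasDerivAt_id l1).div_const l2
    have hf1 : HasDerivAt (fun s => f (s / l2)) (deriv f u * (1/l2)) l1 :=
      (hfd u hu0).comp l1 hinner2
    exact hg.mul hf1
  -- Second partial derivative
  have h2 : HasDerivAt (fun s => (l1 * s ^ 2) ^ (h / 3) * f (l1 / s))
      ((h/3) * (l1*l2^2)^(h/3-1) * (2*l1*l2) * f u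
        + (l1*l2^2)^(h/3) * (deriv f u * (-(l1 / l2^2)))) l2 := by
    have hinner : HasDerivAt (fun s : ℝ => l1 * s^2) (2*l1*l2) l2 := by
      have := (hasDerivAt_pow 2 l2).const_mul l1
      exact this.congr_deriv (by norm_num; ring)
    have hg : HasDerivAt (fun s => (l1 * s^2)^(h/3))
        ((h/3) * (l1*l2^2)^(h/3-1) * (2*l1*l2)) l2 := by
      have := (Real.hasDerivAt_rpow_const (x := l1*l2^2) (p := h/3)
        (Or.inl hP.ne')).comp l2 hinner
      exact this.congr_deriv (by ring)
    have hinner2 : HasDerivAt (fun s : ℝ => l1 / s) (-(l1 / l2^2)) l2 := by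
      have := (hasDerivAt_inv hl2.ne').const_mul l1
      simp only [div_eq_mul_inv]
      exact this.congr_deriv (by ring)
    have hf1 : HasDerivAt (fun s => f (l1 / s)) (deriv f u * (-(l1 / l2^2))) l2 :=
      (hfd u hu0).comp l2 hinner2
    exact hg.mul hf1
  rw [h1.deriv, h2.deriv]
  have hnum : l1 * ((h/3) * (l1*l2^2)^(h/3-1) * l2^2 * f u
        + (l1*l2^2)^(h/3) * (deriv f u * (1/l2)))
      - (1/2) * l2 * ((h/3) * (l1*l2^2)^(h/3-1) * (2*l1*l2) * f u
        + (l1*l2^2)^(h/3) * (deriv f u * (-(l1 / l2^2))))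
      = (l1*l2^2)^(h/3) * deriv f u * (3/2) * (l1/l2) := by
    field_simp
    ring
  rw [hnum]
  have hA : (0:ℝ) < (l1*l2^2)^(h/3) := Real.rpow_pos_of_pos hP _
  -- monotonicity of deriv f on Ioi 0
  have hc : ContDiffOn ℝ 1 (deriv f) (Ioi 0) :=
    hfC2.deriv_of_isOpen isOpen_Ioi (by norm_num)
  have hmono : MonotoneOn (deriv f) (Ioi 0) := by
    apply monotoneOn_of_deriv_nonneg (convex_Ioi 0) hc.continuousOn
    · intro x hx
      rw [interior_Ioi] at hx
      exact ((hc.differentiableOn one_ne_zero).differentiableAt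
        (isOpen_Ioi.mem_nhds hx)).differentiableWithinAt
    · intro x hx; rw [interior_Ioi] at hx; exact hf'' x hx
  rcases lt_or_gt_of_ne hne with hlt | hgt
  · -- l1 < l2 : u < 1, deriv f u ≤ 0, l1 - l2 < 0
    have hu1 : u < 1 := by rw [hu, div_lt_one hl2]; exact hlt
    have hd : deriv f u ≤ 0 := by
      have := hmono (mem_Ioi.mpr hu0) (mem_Ioi.mpr one_pos) hu1.le
      rwa [hf'1] at this
    apply div_nonneg_iff.mpr
    refine Or.inr ⟨?_, by linarith⟩
    have hx : (l1*l2^2)^(h/3) * deriv f u ≤ 0 :=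
      mul_nonpos_of_nonneg_of_nonpos hA.le hd
    have h2 : (0:ℝ) ≤ (3/2) * (l1/l2) := by positivity
    nlinarith
  · -- l2 < l1 : u > 1, deriv f u ≥ 0
    have hu1 : 1 < u := by rw [hu, lt_div_iff₀ hl2]; linarith
    have hd : 0 ≤ deriv f u := by
      have := hmono (mem_Ioi.mpr one_pos) (mem_Ioi.mpr hu0) hu1.le
      rwa [hf'1] at this
    apply div_nonneg _ (by linarith)
    positivity
end
end
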